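/- arXiv:1903.07837 — 2 statements merged into one kernel-verified Lean document; each statement's English description precedes it below -/
import Mathlib

section
/- Let M be a two-counter Minsky machine with instruction set I and let (A, R, Rp, A0, ↪) be its APA encoding. If x = (q1, 2, q2, ε) ∈ I, then for all m1, m2 ∈ ℕ and every reference set Ax ⊆ A there exist two consecutive APA transitions F(A^I ∪ {σQ(q1), σ1(m1), σ2(m2)}) ↪^{Ax} F(A^I ∪ {σIc(x), σ1(m1), σ2(m2)}) ↪^{Ax} F(A^I ∪ {σQ(q2), σ1(m1), σ2(m2+1)}), simulating the increment of the second counter. -/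
/-- A two-counter Minsky machine over a state type `Q`.  An instruction
`(q1, i, q2, u)` has source state `q1 ≠ qf`, counter index `i ∈ {1,2}`,
target state `q2` and optional alternative target `u : Option Q`
(`none` playing the role of `ε`). -/
structure Minsky (Q : Type*) where
  n1 : ℕ
  n2 : ℕ
  q0 : Q
  qf : Q
  I : Set (Q × ℕ × Q × Option Q)
  I_idx : ∀ x ∈ I, x.2.1 = 1 ∨ x.2.1 = 2
  I_src : ∀ x ∈ I, x.1 ≠ qf
  I_total : ∀ q : Q, q ≠ qf → ∃ i q2 u, (q, i, q2, u) ∈ I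

/-- The one-step relation `⇒` of a two-counter Minsky machine. -/
inductive Minsky.Step {Q : Type*} (M : Minsky Q) : Q × ℕ × ℕ → Q × ℕ × ℕ → Prop
  | inc1 {q1 q2 : Q} {m1 m2 : ℕ} : (q1, 1, q2, (none : Option Q)) ∈ M.I →
      M.Step (q1, m1, m2) (q2, m1 + 1, m2)
  | inc2 {q1 q2 : Q} {m1 m2 : ℕ} : (q1, 2, q2, (none : Option Q)) ∈ M.I →
      M.Step (q1, m1, m2) (q2, m1, m2 + 1)
  | dec1 {q1 q2 q3 : Q} {m1 m2 : ℕ} : (q1, 1, q2, some q3) ∈ M.I → 0 < m1 →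
      M.Step (q1, m1, m2) (q3, m1 - 1, m2)
  | dec2 {q1 q2 q3 : Q} {m1 m2 : ℕ} : (q1, 2, q2, some q3) ∈ M.I → 0 < m2 →
      M.Step (q1, m1, m2) (q3, m1, m2 - 1)
  | zero1 {q1 q2 q3 : Q} {m2 : ℕ} : (q1, 1, q2, some q3) ∈ M.I →
      M.Step (q1, 0, m2) (q2, 0, m2)
  | zero2 {q1 q2 q3 : Q} {m1 : ℕ} : (q1, 2, q2, some q3) ∈ M.I →
      M.Step (q1, m1, 0) (q2, m1, 0)

/-- `M.StepN k c c'` says `⇒^k(c) = c'`, i.e. `c'` is obtained from `c`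
by exactly `k` Minsky machine steps. -/
def Minsky.StepN {Q : Type*} (M : Minsky Q) : ℕ → Q × ℕ × ℕ → Q × ℕ × ℕ → Prop
  | 0, c, c' => c = c'
  | k + 1, c, c' => ∃ c'', M.Step c c'' ∧ M.StepN k c'' c'

/-- An Abstract Persuasion Argumentation framework over the argument type `α`:
an attack relation `R`, a persuasion relation `Rp ⊆ A × (A ∪ {ε}) × A`
(`none` playing the role of `ε`), and an initial set `A0`.
A state `F(A1)` is identified with the set `A1 ⊆ A` of visible arguments
(since the state is `(A1, R ∩ (A1 × A1))`, a function of `A1`). -/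
structure APA (α : Type*) where
  R : Set (α × α)
  Rp : Set (α × Option α × α)
  A0 : Set α

namespace APA

variable {α : Type*} (F : APA α)

/-- `a1` attacks `a2` in the state `F(A1)`. -/
def Attacks (A1 : Set α) (a1 a2 : α) : Prop :=
  a1 ∈ A1 ∧ a2 ∈ A1 ∧ (a1, a2) ∈ F.R

/-- `Γ^{Ax}_{F(A1)}`: members `(a1, α, a2)` of `Rp` with `a1 ∈ A1`,
`α ∈ {ε} ∪ A1`, and `a1` not attacked in `F(A1)` by any member of `Ax`. -/
def gamma (Ax A1 : Set α) : Set (α × Option α × α) :=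
  {t | t ∈ F.Rp ∧ t.1 ∈ A1 ∧ (∀ a : α, t.2.1 = some a → a ∈ A1) ∧
    ∀ b ∈ Ax, ¬ F.Attacks A1 b t.1}

/-- `neg^{A1}(Γ)`. -/
def neg (A1 : Set α) (Γ : Set (α × Option α × α)) : Set α :=
  {ax | ax ∈ A1 ∧ ∃ a1 ∈ A1, ∃ a2 : α, (a1, some ax, a2) ∈ Γ}

/-- `pos^{A1}(Γ)`. -/
def pos (A1 : Set α) (Γ : Set (α × Option α × α)) : Set α :=
  {a2 | ∃ a1 ∈ A1, ∃ m : Option α, (∀ a : α, m = some a → a ∈ A1) ∧ (a1, m, a2) ∈ Γ}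

/-- The transition `F(A1) ↪^{Ax} F(A2)` effected by the specific nonempty
`Γ ⊆ Γ^{Ax}_{F(A1)}`. -/
def TransVia (Ax : Set α) (Γ : Set (α × Option α × α)) (A1 A2 : Set α) : Prop :=
  Γ.Nonempty ∧ Γ ⊆ F.gamma Ax A1 ∧ A2 = (A1 \ neg A1 Γ) ∪ pos A1 Γ

/-- The transition relation `F(A1) ↪^{Ax} F(A2)`. -/
def Trans (Ax A1 A2 : Set α) : Prop :=
  ∃ Γ : Set (α × Option α × α), F.TransVia Ax Γ A1 A2

/-- A state `F(A1)` is reachable iff it is obtained from the initial state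
`F(A0)` by a finite sequence of transitions (with arbitrary reference sets). -/
def Reachable (A1 : Set α) : Prop :=
  Relation.ReflTransGen (fun X Y => ∃ Ax : Set α, F.Trans Ax X Y) F.A0 A1

end APA

/-- `sigC σ1 σ2 i` is `σi` for `i ∈ {1, 2}`. -/
def sigC {α : Type*} (σ1 σ2 : ℕ → α) (i : ℕ) : ℕ → α :=
  if i = 1 then σ1 else σ2

/-- The persuasion relation of the APA encoding of a Minsky machine `M`. -/
def encRp {Q α : Type*} (M : Minsky Q) (σ1 σ2 : ℕ → α) (σQ : Q → α)
    (σI σIc : M.I → α) : Set (α × Option α × α) :=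
  {t | (∃ x : M.I, t = (σI x, some (σQ x.val.1), σIc x)) ∨
    (∃ x : M.I, ∃ n : ℕ, x.val.2.2.2 = none ∧
      t = (σIc x, some (sigC σ1 σ2 x.val.2.1 n), sigC σ1 σ2 x.val.2.1 (n + 1))) ∨
    (∃ x : M.I, ∃ n : ℕ, 1 ≤ n ∧ (∃ q3 : Q, x.val.2.2.2 = some q3) ∧
      t = (σIc x, some (sigC σ1 σ2 x.val.2.1 n), sigC σ1 σ2 x.val.2.1 (n - 1))) ∨
    (∃ x : M.I, ∃ n : ℕ, x.val.2.2.2 = none ∧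
      t = (sigC σ1 σ2 x.val.2.1 n, some (σIc x), σQ x.val.2.2.1)) ∨
    (∃ x : M.I, ∃ n : ℕ, 1 ≤ n ∧ ∃ q3 : Q, x.val.2.2.2 = some q3 ∧
      t = (sigC σ1 σ2 x.val.2.1 n, some (σIc x), σQ q3)) ∨
    (∃ x : M.I, ∃ q3 : Q, x.val.2.2.2 = some q3 ∧
      t = (sigC σ1 σ2 x.val.2.1 0, some (σIc x), σQ x.val.2.2.1))}

/-- The APA encoding of a two-counter Minsky machine `M`, over the argument
type `α` (playing the role of the class `A` of arguments): injective maps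
`σ1, σ2, σQ, σI, σIc` with pairwise disjoint ranges covering `α`, an empty
attack relation, the persuasion relation `encRp`, and the initial set
`{σ1 n1, σ2 n2, σQ q0} ∪ A^I`. -/
structure Encoding {Q : Type*} (M : Minsky Q) (α : Type*) extends APA α where
  σ1 : ℕ → α
  σ2 : ℕ → α
  σQ : Q → α
  σI : M.I → α
  σIc : M.I → α
  inj1 : Function.Injective σ1
  inj2 : Function.Injective σ2
  injQ : Function.Injective σQ
  injI : Function.Injective σI
  injIc : Function.Injective σIc
  disjoint_ranges : List.Pairwise Disjoint
    [Set.range σ1, Set.range σ2, Set.range σQ, Set.range σI, Set.range σIc]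
  ranges_cover : Set.range σ1 ∪ Set.range σ2 ∪ Set.range σQ ∪
    Set.range σI ∪ Set.range σIc = Set.univ
  R_empty : toAPA.R = ∅
  Rp_spec : toAPA.Rp = encRp M σ1 σ2 σQ σI σIc
  A0_spec : toAPA.A0 = {σ1 M.n1, σ2 M.n2, σQ M.q0} ∪ Set.range σI

/-- The set of visible arguments of the APA state `F(A^I ∪ {σQ q, σ1 m1, σ2 m2})`
corresponding to the Minsky machine configuration `(q, m1, m2)`. -/
def encState {Q α : Type*} {M : Minsky Q} (E : Encoding M α)
    (q : Q) (m1 m2 : ℕ) : Set α :=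
  Set.range E.σI ∪ {E.σQ q, E.σ1 m1, E.σ2 m2}

/-- The set of visible arguments of the intermediate APA state
`F(A^I ∪ {σIc x, σ1 m1, σ2 m2})`. -/
def encStateC {Q α : Type*} {M : Minsky Q} (E : Encoding M α)
    (x : M.I) (m1 m2 : ℕ) : Set α :=
  Set.range E.σI ∪ {E.σIc x, E.σ1 m1, E.σ2 m2}


section AuxLemmas

variable {Q α : Type*} {M : Minsky Q}

lemma encoding_disj (E : Encoding M α) :
    Disjoint (Set.range E.σ1) (Set.range E.σ2) ∧
    Disjoint (Set.range E.σ1) (Set.range E.σQ) ∧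
    Disjoint (Set.range E.σ1) (Set.range E.σI) ∧
    Disjoint (Set.range E.σ1) (Set.range E.σIc) ∧
    Disjoint (Set.range E.σ2) (Set.range E.σQ) ∧
    Disjoint (Set.range E.σ2) (Set.range E.σI) ∧
    Disjoint (Set.range E.σ2) (Set.range E.σIc) ∧
    Disjoint (Set.range E.σQ) (Set.range E.σI) ∧
    Disjoint (Set.range E.σQ) (Set.range E.σIc) ∧
    Disjoint (Set.range E.σI) (Set.range E.σIc) := by
  have h := E.disjoint_ranges
  simp only [List.pairwise_cons, List.mem_cons, List.not_mem_nil, List.mem_singleton,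
    forall_eq_or_imp, forall_eq, List.Pairwise.nil, and_true] at h
  tauto

lemma ne_of_disj {s t : Set α} (h : Disjoint s t) {a b : α}
    (ha : a ∈ s) (hb : b ∈ t) : a ≠ b :=
  fun e => (Set.disjoint_left.mp h ha) (e ▸ hb)

lemma no_attacks (E : Encoding M α) (A1 : Set α) (b a : α) :
    ¬ E.toAPA.Attacks A1 b a := by
  intro h
  have := h.2.2
  rw [E.R_empty] at this
  exact this

end AuxLemmas

/-- simulation of the increment instruction `(q1, 2, q2, ε)`
of the second counter by two consecutive APA transitions. -/
theorem increment_second_counter_simulated {Q α : Type*} [Finite Q]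
    (M : Minsky Q) (E : Encoding M α) (q1 q2 : Q)
    (hx : (q1, 2, q2, (none : Option Q)) ∈ M.I) (m1 m2 : ℕ) (Ax : Set α) :
    E.toAPA.Trans Ax (encState E q1 m1 m2)
      (encStateC E ⟨(q1, 2, q2, none), hx⟩ m1 m2) ∧
    E.toAPA.Trans Ax (encStateC E ⟨(q1, 2, q2, none), hx⟩ m1 m2)
      (encState E q2 m1 (m2 + 1)) := by
  obtain ⟨d12, d1Q, d1I, d1Ic, d2Q, d2I, d2Ic, dQI, dQIc, dIIc⟩ := encoding_disj E
  set x : M.I := ⟨(q1, 2, q2, none), hx⟩ with hxdef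
  set A1 := encState E q1 m1 m2 with hA1
  set A2 := encStateC E x m1 m2 with hA2
  set A3 := encState E q2 m1 (m2 + 1) with hA3
  have hQ1A1 : E.σQ q1 ∈ A1 := by simp [hA1, encState]
  have hIxA1 : E.σI x ∈ A1 := by simp [hA1, encState]
  have hIcA2 : E.σIc x ∈ A2 := by simp [hA2, encStateC]
  have h2A2 : E.σ2 m2 ∈ A2 := by simp [hA2, encStateC]
  -- distinctness facts
  have hQ1I : E.σQ q1 ∉ Set.range E.σI :=
    fun h => ne_of_disj dQI ⟨q1, rfl⟩ h rfl
  have h1Q1 : E.σ1 m1 ≠ E.σQ q1 := ne_of_disj d1Q ⟨m1, rfl⟩ ⟨q1, rfl⟩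
  have h2Q1 : E.σ2 m2 ≠ E.σQ q1 := ne_of_disj d2Q ⟨m2, rfl⟩ ⟨q1, rfl⟩
  have hIcI : E.σIc x ∉ Set.range E.σI :=
    fun h => (ne_of_disj dIIc h ⟨x, rfl⟩) rfl
  have h2I : E.σ2 m2 ∉ Set.range E.σI :=
    fun h => (ne_of_disj d2I ⟨m2, rfl⟩ h) rfl
  have h12 : E.σ1 m1 ≠ E.σ2 m2 := ne_of_disj d12 ⟨m1, rfl⟩ ⟨m2, rfl⟩
  have h1Ic : E.σ1 m1 ≠ E.σIc x := ne_of_disj d1Ic ⟨m1, rfl⟩ ⟨x, rfl⟩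
  have hQ2I : E.σQ q2 ∉ Set.range E.σI :=
    fun h => ne_of_disj dQI ⟨q2, rfl⟩ h rfl
  constructor
  · -- first transition
    refine ⟨{(E.σI x, some (E.σQ q1), E.σIc x)}, Set.singleton_nonempty _, ?_, ?_⟩
    · rintro t ht
      rw [Set.mem_singleton_iff] at ht
      subst ht
      refine ⟨?_, hIxA1, ?_, fun b _ h => no_attacks E _ _ _ h⟩
      · rw [E.Rp_spec]
        left
        exact ⟨x, rfl⟩
      · rintro a ha
        rw [Option.some_inj] at ha
        subst ha
        exact hQ1A1
    · have hneg : APA.neg A1 {(E.σI x, some (E.σQ q1), E.σIc x)} = {E.σQ q1} := by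
        ext a
        simp only [APA.neg, Set.mem_setOf_eq, Set.mem_singleton_iff, Prod.mk.injEq,
          Option.some_inj]
        constructor
        · rintro ⟨-, a1, -, a2, -, rfl, -⟩
          rfl
        · rintro rfl
          exact ⟨hQ1A1, E.σI x, hIxA1, E.σIc x, rfl, rfl, rfl⟩
      have hpos : APA.pos A1 {(E.σI x, some (E.σQ q1), E.σIc x)} = {E.σIc x} := by
        ext a
        simp only [APA.pos, Set.mem_setOf_eq, Set.mem_singleton_iff, Prod.mk.injEq]
        constructor
        · rintro ⟨a1, -, m, -, -, -, rfl⟩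
          rfl
        · rintro rfl
          exact ⟨E.σI x, hIxA1, some (E.σQ q1),
            fun a ha => by rw [Option.some_inj] at ha; subst ha; exact hQ1A1, rfl, rfl, rfl⟩
      rw [hneg, hpos, hA2, hA1, encState, encStateC]
      ext a
      simp only [Set.mem_union, Set.mem_diff, Set.mem_singleton_iff, Set.mem_insert_iff]
      constructor
      · rintro (h | h | h | h)
        · exact Or.inl ⟨Or.inl h, fun e => hQ1I (e ▸ h)⟩
        · exact Or.inr h
        · exact Or.inl ⟨Or.inr (Or.inr (Or.inl h)), h ▸ h1Q1⟩
        · exact Or.inl ⟨Or.inr (Or.inr (Or.inr h)), h ▸ h2Q1⟩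
      · rintro (⟨(h | h | h | h), hne⟩ | h)
        · exact Or.inl h
        · exact absurd h hne
        · exact Or.inr (Or.inr (Or.inl h))
        · exact Or.inr (Or.inr (Or.inr h))
        · exact Or.inr (Or.inl h)
  · -- second transition
    refine ⟨{(E.σIc x, some (E.σ2 m2), E.σ2 (m2 + 1)),
             (E.σ2 m2, some (E.σIc x), E.σQ q2)}, ⟨_, Or.inl rfl⟩, ?_, ?_⟩
    · rintro t (rfl | rfl)
      · refine ⟨?_, hIcA2, ?_, fun b _ h => no_attacks E _ _ _ h⟩
        · rw [E.Rp_spec]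
          right; left
          exact ⟨x, m2, rfl, by simp [sigC, hxdef]⟩
        · rintro a ha
          rw [Option.some_inj] at ha
          subst ha
          exact h2A2
      · refine ⟨?_, h2A2, ?_, fun b _ h => no_attacks E _ _ _ h⟩
        · rw [E.Rp_spec]
          right; right; right; left
          exact ⟨x, m2, rfl, by simp [sigC, hxdef]⟩
        · rintro a ha
          rw [Option.some_inj] at ha
          subst ha
          exact hIcA2
    · have hneg : APA.neg A2 {(E.σIc x, some (E.σ2 m2), E.σ2 (m2 + 1)),
             (E.σ2 m2, some (E.σIc x), E.σQ q2)} = {E.σ2 m2, E.σIc x} := by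
        ext a
        simp only [APA.neg, Set.mem_setOf_eq, Set.mem_insert_iff, Set.mem_singleton_iff,
          Prod.mk.injEq, Option.some_inj]
        constructor
        · rintro ⟨-, a1, -, a2, (⟨-, rfl, -⟩ | ⟨-, rfl, -⟩)⟩ <;> tauto
        · rintro (rfl | rfl)
          · exact ⟨h2A2, E.σIc x, hIcA2, E.σ2 (m2 + 1), Or.inl ⟨rfl, rfl, rfl⟩⟩
          · exact ⟨hIcA2, E.σ2 m2, h2A2, E.σQ q2, Or.inr ⟨rfl, rfl, rfl⟩⟩
      have hpos : APA.pos A2 {(E.σIc x, some (E.σ2 m2), E.σ2 (m2 + 1)),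
             (E.σ2 m2, some (E.σIc x), E.σQ q2)} = {E.σ2 (m2 + 1), E.σQ q2} := by
        ext a
        simp only [APA.pos, Set.mem_setOf_eq, Set.mem_insert_iff, Set.mem_singleton_iff,
          Prod.mk.injEq]
        constructor
        · rintro ⟨a1, -, m, -, (⟨-, -, rfl⟩ | ⟨-, -, rfl⟩)⟩ <;> tauto
        · rintro (rfl | rfl)
          · exact ⟨E.σIc x, hIcA2, some (E.σ2 m2),
              fun a ha => by rw [Option.some_inj] at ha; subst ha; exact h2A2,
              Or.inl ⟨rfl, rfl, rfl⟩⟩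
          · exact ⟨E.σ2 m2, h2A2, some (E.σIc x),
              fun a ha => by rw [Option.some_inj] at ha; subst ha; exact hIcA2,
              Or.inr ⟨rfl, rfl, rfl⟩⟩
      rw [hneg, hpos, hA2, hA3, encState, encStateC]
      ext a
      simp only [Set.mem_union, Set.mem_diff, Set.mem_singleton_iff, Set.mem_insert_iff,
        not_or]
      constructor
      · rintro (h | h | h | h)
        · exact Or.inl ⟨Or.inl h, fun e => h2I (e ▸ h), fun e => hIcI (e ▸ h)⟩
        · exact Or.inr (Or.inr h)
        · exact Or.inl ⟨Or.inr (Or.inr (Or.inl h)), h ▸ h12, h ▸ h1Ic⟩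
        · exact Or.inr (Or.inl h)
      · rintro (⟨(h | h | h | h), hne1, hne2⟩ | h | h)
        · exact Or.inl h
        · exact absurd h hne2
        · exact Or.inr (Or.inr (Or.inl h))
        · exact absurd h hne1
        · exact Or.inr (Or.inr (Or.inr h))
        · exact Or.inr (Or.inl h)
end

section
/- Let M be a two-counter Minsky machine with instruction set I and let (A, R, Rp, A0, ↪) be its APA encoding. If x = (q1, 2, q2, q3) ∈ I, then for all m1 ∈ ℕ, all m2 ≥ 1, and every reference set Ax ⊆ A there exist two consecutive APA transitions F(A^I ∪ {σQ(q1), σ1(m1), σ2(m2)}) ↪^{Ax} F(A^I ∪ {σIc(x), σ1(m1), σ2(m2)}) ↪^{Ax} F(A^I ∪ {σQ(q3), σ1(m1), σ2(m2−1)}), simulating the decrement of the second counter. -/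
private lemma disj_ne {α β γ : Type*} {f : β → α} {g : γ → α}
    (h : Disjoint (Set.range f) (Set.range g)) (b : β) (c : γ) : f b ≠ g c :=
  fun e => Set.disjoint_left.mp h (Set.mem_range_self b) ⟨c, e.symm⟩

/-- simulation of the decrement instruction `(q1, 2, q2, q3)`
on the second counter (when `m2 ≥ 1`) by two consecutive APA transitions. -/
theorem decrement_second_counter_simulated {Q α : Type*} [Finite Q]
    (M : Minsky Q) (E : Encoding M α) (q1 q2 q3 : Q)
    (hx : (q1, 2, q2, some q3) ∈ M.I) (m1 : ℕ) (m2 : ℕ) (hm2 : 1 ≤ m2)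
    (Ax : Set α) :
    E.toAPA.Trans Ax (encState E q1 m1 m2)
      (encStateC E ⟨(q1, 2, q2, some q3), hx⟩ m1 m2) ∧
    E.toAPA.Trans Ax (encStateC E ⟨(q1, 2, q2, some q3), hx⟩ m1 m2)
      (encState E q3 m1 (m2 - 1)) := by
  classical
  set x : M.I := ⟨(q1, 2, q2, some q3), hx⟩ with hxdef
  have hd := E.disjoint_ranges
  simp only [List.pairwise_cons, List.not_mem_nil, List.mem_singleton, List.mem_cons,
    forall_eq_or_imp, forall_eq, List.Pairwise.nil, and_true] at hd
  obtain ⟨⟨d12, d1Q, d1I, d1C, -⟩, ⟨d2Q, d2I, d2C, -⟩, ⟨dQI, dQC, -⟩, ⟨dIC, -⟩, -⟩ := hd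
  have noatt : ∀ (A1 : Set α) (a1 : α), ∀ b ∈ Ax, ¬ E.toAPA.Attacks A1 b a1 := by
    intro A1 a1 b _ h
    have := h.2.2
    rw [E.R_empty] at this
    exact this
  have s2 : sigC E.σ1 E.σ2 2 = E.σ2 := rfl
  constructor
  · -- first transition
    set A1 := encState E q1 m1 m2 with hA1
    have hQ1 : E.σQ q1 ∈ A1 := Or.inr (Or.inl rfl)
    have hI1 : E.σI x ∈ A1 := Or.inl (Set.mem_range_self x)
    refine ⟨{(E.σI x, some (E.σQ q1), E.σIc x)}, Set.singleton_nonempty _, ?_, ?_⟩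
    · intro t ht
      rw [Set.mem_singleton_iff] at ht
      subst ht
      refine ⟨?_, hI1, ?_, noatt _ _⟩
      · rw [E.Rp_spec]
        exact Or.inl ⟨x, rfl⟩
      · rintro a ha
        rw [Option.some_inj] at ha
        exact ha ▸ hQ1
    · have hneg : APA.neg A1 {(E.σI x, some (E.σQ q1), E.σIc x)} = {E.σQ q1} := by
        ext a
        simp only [APA.neg, Set.mem_setOf_eq, Set.mem_singleton_iff, Prod.mk.injEq,
          Option.some.injEq]
        constructor
        · rintro ⟨-, a1, -, a2, -, h, -⟩
          exact h
        · rintro rfl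
          exact ⟨hQ1, E.σI x, hI1, E.σIc x, rfl, rfl, rfl⟩
      have hpos : APA.pos A1 {(E.σI x, some (E.σQ q1), E.σIc x)} = {E.σIc x} := by
        ext a
        simp only [APA.pos, Set.mem_setOf_eq, Set.mem_singleton_iff, Prod.mk.injEq]
        constructor
        · rintro ⟨a1, -, m, -, -, -, h⟩
          exact h
        · rintro rfl
          exact ⟨E.σI x, hI1, some (E.σQ q1), by rintro b hb; rw [Option.some_inj] at hb; exact hb ▸ hQ1,
            rfl, rfl, rfl⟩
      rw [hneg, hpos]
      ext a
      simp only [encStateC, encState, Set.mem_union, Set.mem_insert_iff,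
        Set.mem_singleton_iff, Set.mem_diff, Set.mem_range]
      constructor
      · rintro (⟨y, rfl⟩ | rfl | rfl | rfl)
        · exact Or.inl ⟨Or.inl ⟨y, rfl⟩, fun h => disj_ne dQI q1 y h.symm⟩
        · exact Or.inr rfl
        · exact Or.inl ⟨Or.inr (Or.inr (Or.inl rfl)), disj_ne d1Q m1 q1⟩
        · exact Or.inl ⟨Or.inr (Or.inr (Or.inr rfl)), disj_ne d2Q m2 q1⟩
      · rintro (⟨(⟨y, rfl⟩ | rfl | rfl | rfl), hne⟩ | rfl)
        · exact Or.inl ⟨y, rfl⟩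
        · exact absurd rfl hne
        · exact Or.inr (Or.inr (Or.inl rfl))
        · exact Or.inr (Or.inr (Or.inr rfl))
        · exact Or.inr (Or.inl rfl)
  · -- second transition
    set A1 := encStateC E x m1 m2 with hA1
    have hC1 : E.σIc x ∈ A1 := Or.inr (Or.inl rfl)
    have h21 : E.σ2 m2 ∈ A1 := Or.inr (Or.inr (Or.inr rfl))
    set t1 : α × Option α × α := (E.σIc x, some (E.σ2 m2), E.σ2 (m2 - 1)) with ht1
    set t2 : α × Option α × α := (E.σ2 m2, some (E.σIc x), E.σQ q3) with ht2
    refine ⟨{t1, t2}, ⟨t1, Or.inl rfl⟩, ?_, ?_⟩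
    · rintro t (rfl | rfl)
      · refine ⟨?_, hC1, ?_, noatt _ _⟩
        · rw [E.Rp_spec]
          refine Or.inr (Or.inr (Or.inl ⟨x, m2, hm2, ⟨q3, rfl⟩, ?_⟩))
          rw [ht1]
          rfl
        · rintro a ha
          rw [ht1] at ha
          simp only [Option.some_inj] at ha
          exact ha ▸ h21
      · refine ⟨?_, h21, ?_, noatt _ _⟩
        · rw [E.Rp_spec]
          refine Or.inr (Or.inr (Or.inr (Or.inr (Or.inl ⟨x, m2, hm2, q3, rfl, ?_⟩))))
          rw [ht2]
          rfl
        · rintro a ha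
          rw [ht2] at ha
          simp only [Option.some_inj] at ha
          exact ha ▸ hC1
    · have hneg : APA.neg A1 {t1, t2} = {E.σ2 m2, E.σIc x} := by
        ext a
        simp only [APA.neg, Set.mem_setOf_eq, Set.mem_insert_iff, Set.mem_singleton_iff,
          ht1, ht2, Prod.mk.injEq, Option.some.injEq]
        constructor
        · rintro ⟨-, a1, -, a2, (⟨-, h, -⟩ | ⟨-, h, -⟩)⟩
          · exact Or.inl h
          · exact Or.inr h
        · rintro (rfl | rfl)
          · exact ⟨h21, E.σIc x, hC1, E.σ2 (m2 - 1), Or.inl ⟨rfl, rfl, rfl⟩⟩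
          · exact ⟨hC1, E.σ2 m2, h21, E.σQ q3, Or.inr ⟨rfl, rfl, rfl⟩⟩
      have hpos : APA.pos A1 {t1, t2} = {E.σ2 (m2 - 1), E.σQ q3} := by
        ext a
        simp only [APA.pos, Set.mem_setOf_eq, Set.mem_insert_iff, Set.mem_singleton_iff,
          ht1, ht2, Prod.mk.injEq]
        constructor
        · rintro ⟨a1, -, m, -, (⟨-, -, h⟩ | ⟨-, -, h⟩)⟩
          · exact Or.inl h
          · exact Or.inr h
        · rintro (rfl | rfl)
          · exact ⟨E.σIc x, hC1, some (E.σ2 m2),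
              by rintro b hb; rw [Option.some_inj] at hb; exact hb ▸ h21,
              Or.inl ⟨rfl, rfl, rfl⟩⟩
          · exact ⟨E.σ2 m2, h21, some (E.σIc x),
              by rintro b hb; rw [Option.some_inj] at hb; exact hb ▸ hC1,
              Or.inr ⟨rfl, rfl, rfl⟩⟩
      rw [hneg, hpos]
      ext a
      simp only [encStateC, encState, Set.mem_union, Set.mem_insert_iff,
        Set.mem_singleton_iff, Set.mem_diff, Set.mem_range, not_or]
      constructor
      · rintro (⟨y, rfl⟩ | rfl | rfl | rfl)
        · exact Or.inl ⟨Or.inl ⟨y, rfl⟩, disj_ne d2I m2 y ∘ Eq.symm, disj_ne dIC y x⟩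
        · exact Or.inr (Or.inr rfl)
        · exact Or.inl ⟨Or.inr (Or.inr (Or.inl rfl)), disj_ne d12 m1 m2, disj_ne d1C m1 x⟩
        · exact Or.inr (Or.inl rfl)
      · rintro (⟨(⟨y, rfl⟩ | rfl | rfl | rfl), hne1, hne2⟩ | rfl | rfl)
        · exact Or.inl ⟨y, rfl⟩
        · exact absurd rfl hne2
        · exact Or.inr (Or.inr (Or.inl rfl))
        · exact absurd rfl hne1
        · exact Or.inr (Or.inr (Or.inr rfl))
        · exact Or.inr (Or.inl rfl)
end
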